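/- arXiv:1710.03982 — 2 statements merged into one kernel-verified Lean document; each statement's English description precedes it below -/
import Mathlib

section
/- Let α, β, γ ∈ ℂ with γ not equal to any nonpositive integer. Then the hypergeometric series ∑_{n=0}^∞ (α)_n(β)_n/((γ)__n · n!) · x^n converges for every complex x with |x| < 1, and the resulting function F is twice complex-differentiable on the open unit disc and satisfies Euler's hypergeometric differential equation x(1−x)·F''(x) + (γ − (α+β+1)x)·F'(x) − αβ·F(x) = 0 for all |x| < 1. -/
open Filter Topology Metric

/-- Growth property: coefficients grow slower than any geometric `R ^ n` with `R > 1`. -/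
private def PG (c : ℕ → ℂ) : Prop := ∀ R : ℝ, 1 < R → ∃ C : ℝ, ∀ n, ‖c n‖ ≤ C * R ^ n

namespace PG

variable {c c' : ℕ → ℂ}

private lemma congr (h : PG c) (e : ∀ n, c' n = c n) : PG c' := fun R hR => by
  obtain ⟨C, hC⟩ := h R hR
  exact ⟨C, fun n => (e n ▸ hC n : _)⟩

private lemma add (h : PG c) (h' : PG c') : PG (fun n => c n + c' n) := fun R hR => by
  obtain ⟨C, hC⟩ := h R hR
  obtain ⟨C', hC'⟩ := h' R hR
  refine ⟨C + C', fun n => ?_⟩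
  calc ‖c n + c' n‖ ≤ ‖c n‖ + ‖c' n‖ := norm_add_le _ _
    _ ≤ C * R ^ n + C' * R ^ n := add_le_add (hC n) (hC' n)
    _ = (C + C') * R ^ n := by ring

private lemma const_mul (h : PG c) (a : ℂ) : PG (fun n => a * c n) := fun R hR => by
  obtain ⟨C, hC⟩ := h R hR
  refine ⟨‖a‖ * C, fun n => ?_⟩
  rw [norm_mul, mul_assoc]
  exact mul_le_mul_of_nonneg_left (hC n) (norm_nonneg a)

private lemma shift (h : PG c) : PG (fun n => c (n + 1)) := fun R hR => by
  obtain ⟨C, hC⟩ := h R hR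
  refine ⟨C * R, fun n => ?_⟩
  calc ‖c (n+1)‖ ≤ C * R ^ (n+1) := hC (n+1)
    _ = C * R * R ^ n := by ring

private lemma nonneg_const {R : ℝ} (hR : 1 < R) {C : ℝ}
    (hC : ∀ n, ‖c n‖ ≤ C * R ^ n) : 0 ≤ C := by
  have := (norm_nonneg (c 0)).trans (hC 0)
  simpa using this

private lemma mul_nat (h : PG c) : PG (fun n => (n : ℂ) * c n) := fun R hR => by
  set S : ℝ := (1 + R) / 2 with hS
  have hS1 : 1 < S := by rw [hS]; linarith
  have hSR : S < R := by rw [hS]; linarith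
  have hRpos : (0:ℝ) < R := by linarith
  obtain ⟨C, hC⟩ := h S hS1
  have hC0 : 0 ≤ C := nonneg_const hS1 hC
  have hq1 : S / R < 1 := (div_lt_one hRpos).2 hSR
  have hq0 : (0:ℝ) ≤ S / R := by positivity
  have hsum : Summable (fun n : ℕ => (n : ℝ) * (S / R) ^ n) := by
    have := summable_pow_mul_geometric_of_norm_lt_one (R := ℝ) 1 (r := S / R)
      (by rwa [Real.norm_eq_abs, abs_of_nonneg hq0])
    simpa using this
  set K : ℝ := ∑' n : ℕ, (n : ℝ) * (S / R) ^ n with hK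
  refine ⟨C * K, fun n => ?_⟩
  have hterm : (n : ℝ) * (S / R) ^ n ≤ K :=
    Summable.le_tsum hsum n (fun j _ => by positivity)
  have h1 : ‖(n : ℂ) * c n‖ = (n : ℝ) * ‖c n‖ := by
    rw [norm_mul, Complex.norm_natCast]
  rw [h1]
  calc (n : ℝ) * ‖c n‖ ≤ (n : ℝ) * (C * S ^ n) :=
        mul_le_mul_of_nonneg_left (hC n) (Nat.cast_nonneg n)
    _ = C * ((n : ℝ) * (S / R) ^ n) * R ^ n := by
        rw [mul_assoc C, mul_assoc (n:ℝ), ← mul_pow, div_mul_cancel₀ _ hRpos.ne']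
        ring
    _ ≤ C * K * R ^ n := by
        apply mul_le_mul_of_nonneg_right _ (by positivity)
        exact mul_le_mul_of_nonneg_left hterm hC0

private lemma summable (h : PG c) {x : ℂ} (hx : ‖x‖ < 1) :
    Summable fun n => c n * x ^ n := by
  set R : ℝ := 2 / (1 + ‖x‖) with hR
  have hx0 : (0:ℝ) ≤ ‖x‖ := norm_nonneg x
  have h1 : (0:ℝ) < 1 + ‖x‖ := by linarith
  have hR1 : 1 < R := by rw [hR, lt_div_iff₀ h1]; linarith
  obtain ⟨C, hC⟩ := h R hR1
  have hq : R * ‖x‖ < 1 := by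
    rw [hR, div_mul_eq_mul_div, div_lt_one h1]; linarith
  have hq0 : 0 ≤ R * ‖x‖ := by positivity
  apply Summable.of_norm_bounded (g := fun n => C * (R * ‖x‖) ^ n)
    ((summable_geometric_of_lt_one hq0 hq).mul_left C)
  intro n
  rw [norm_mul, norm_pow, mul_pow]
  calc ‖c n‖ * ‖x‖ ^ n ≤ (C * R ^ n) * ‖x‖ ^ n :=
        mul_le_mul_of_nonneg_right (hC n) (by positivity)
    _ = C * (R ^ n * ‖x‖ ^ n) := by ring

private lemma hasDerivAt (h : PG c) {x : ℂ} (hx : ‖x‖ < 1) :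
    HasDerivAt (fun y => ∑' n : ℕ, c n * y ^ n)
      (∑' n : ℕ, ((n : ℂ) + 1) * c (n + 1) * x ^ n) x := by
  set r : ℝ := (1 + ‖x‖) / 2 with hr
  have hx0 : (0:ℝ) ≤ ‖x‖ := norm_nonneg x
  have hr0 : 0 < r := by rw [hr]; linarith
  have hr1 : r < 1 := by rw [hr]; linarith
  have hxr : ‖x‖ < r := by rw [hr]; linarith
  clear_value r
  clear hr
  set R : ℝ := 2 / (1 + r) with hR
  have h1 : (0:ℝ) < 1 + r := by linarith
  have hR1 : 1 < R := by rw [hR, lt_div_iff₀ h1]; linarith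
  have hRr : R * r < 1 := by rw [hR, div_mul_eq_mul_div, div_lt_one h1]; linarith
  clear_value R
  clear hR
  have hRr0 : (0:ℝ) ≤ R * r := by positivity
  obtain ⟨C, hC⟩ := h R hR1
  have hC0 : 0 ≤ C := nonneg_const hR1 hC
  set u : ℕ → ℝ := fun n => C / r * ((n : ℝ) * (R * r) ^ n) with hu
  have hsumu : Summable u := by
    apply Summable.mul_left
    have := summable_pow_mul_geometric_of_norm_lt_one (R := ℝ) 1 (r := R * r)
      (by rwa [Real.norm_eq_abs, abs_of_nonneg hRr0])
    simpa using this
  have hderiv : ∀ n : ℕ, ∀ y : ℂ, HasDerivAt (fun z => c n * z ^ n)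
      (c n * ((n : ℂ) * y ^ (n - 1))) y := fun n y => (hasDerivAt_pow n y).const_mul (c n)
  have hbound : ∀ (n : ℕ) (y : ℂ), y ∈ ball (0:ℂ) r →
      ‖c n * ((n : ℂ) * y ^ (n - 1))‖ ≤ u n := by
    intro n y hy
    rw [mem_ball_zero_iff] at hy
    rw [norm_mul, norm_mul, Complex.norm_natCast, norm_pow]
    match n with
    | 0 => simp [hu]
    | (m+1) =>
      have hyb : ‖y‖ ^ (m + 1 - 1) ≤ r ^ m := by
        simpa using pow_le_pow_left₀ (norm_nonneg y) hy.le m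
      calc ‖c (m+1)‖ * ((m+1 : ℕ) * ‖y‖ ^ (m + 1 - 1))
          ≤ (C * R ^ (m+1)) * ((m+1 : ℕ) * r ^ m) := by
            apply mul_le_mul (hC (m+1)) _ (by positivity) (by positivity)
            exact mul_le_mul_of_nonneg_left hyb (by positivity)
        _ = u (m+1) := by
            rw [hu]
            push_cast
            field_simp
            ring
  have hsum0 : Summable fun n => c n * x ^ n := h.summable hx
  have key := hasDerivAt_tsum_of_isPreconnected hsumu isOpen_ball
    (convex_ball (0:ℂ) r).isPreconnected (fun n y _ => hderiv n y) hbound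
    (mem_ball_zero_iff.2 hxr) hsum0 (mem_ball_zero_iff.2 hxr)
  have hsum' : Summable fun n : ℕ => c n * ((n : ℂ) * x ^ (n - 1)) :=
    Summable.of_norm_bounded hsumu fun n => hbound n x (mem_ball_zero_iff.2 hxr)
  convert key using 1
  case e'_4 => rfl
  case e'_5 => rfl
  rw [Summable.tsum_eq_zero_add hsum']
  simp only [Nat.cast_zero, pow_zero, zero_mul, mul_zero, zero_add]
  refine tsum_congr fun n => ?_
  push_cast
  ring_nf

end PG

private lemma tendsto_ratio (a b : ℂ) (hb : ∀ n : ℕ, b + n ≠ 0) :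
    Tendsto (fun n : ℕ => (a + n) / (b + n)) atTop (𝓝 1) := by
  have hnorm : Tendsto (fun n : ℕ => ‖b + (n : ℂ)‖) atTop atTop := by
    apply tendsto_atTop_mono (fun n : ℕ => ?_)
      (tendsto_atTop_add_const_left atTop (-‖b‖) tendsto_natCast_atTop_atTop)
    have : ‖(n : ℂ)‖ ≤ ‖b‖ + ‖b + n‖ := by
      calc ‖(n : ℂ)‖ = ‖-b + (b + n)‖ := by ring_nf
        _ ≤ ‖-b‖ + ‖b + n‖ := norm_add_le _ _
        _ = ‖b‖ + ‖b + n‖ := by rw [norm_neg]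
    rw [Complex.norm_natCast] at this
    linarith
  have hzero : Tendsto (fun n : ℕ => (a - b) / (b + n)) atTop (𝓝 0) := by
    rw [tendsto_zero_iff_norm_tendsto_zero]
    simp only [norm_div]
    exact Tendsto.div_atTop tendsto_const_nhds hnorm
  have heq : ∀ n : ℕ, (a + n) / (b + n) = (a - b) / (b + n) + 1 := by
    intro n
    rw [div_add' _ _ _ (hb n)]
    congr 1
    ring
  simp_rw [heq]
  simpa using hzero.add tendsto_const_nhds

private lemma tsum_shift {f : ℕ → ℂ} (hf : f 0 = 0) (h : Summable f) :
    ∑' n : ℕ, f (n + 1) = ∑' n : ℕ, f n := by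
  rw [Summable.tsum_eq_zero_add h, hf, zero_add]

/-- The hypergeometric series `F(α, β; γ; x) = ∑ (α)ₙ(β)ₙ/((γ)ₙ n!) xⁿ`. -/
noncomputable def hypergeomF (α β γ : ℂ) (x : ℂ) : ℂ :=
  ∑' n : ℕ,
    (ascPochhammer ℂ n).eval α * (ascPochhammer ℂ n).eval β /
      ((ascPochhammer ℂ n).eval γ * (Nat.factorial n : ℂ)) * x ^ n

/-- If `γ` is not a nonpositive integer, then the hypergeometric series converges on the
open unit disc, and the resulting function is twice complex-differentiable there and
satisfies Euler's hypergeometric differential equation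
`x(1-x) F'' + (γ - (α+β+1)x) F' - αβ F = 0`. -/
theorem hypergeometric_ode (α β γ : ℂ) (hγ : ∀ n : ℕ, γ ≠ -(n : ℂ)) :
    (∀ x : ℂ, ‖x‖ < 1 →
      Summable (fun n : ℕ =>
        (ascPochhammer ℂ n).eval α * (ascPochhammer ℂ n).eval β /
          ((ascPochhammer ℂ n).eval γ * (Nat.factorial n : ℂ)) * x ^ n)) ∧
    (∀ x : ℂ, ‖x‖ < 1 →
      DifferentiableAt ℂ (hypergeomF α β γ) x ∧
        DifferentiableAt ℂ (deriv (hypergeomF α β γ)) x) ∧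
    (∀ x : ℂ, ‖x‖ < 1 →
      x * (1 - x) * deriv (deriv (hypergeomF α β γ)) x +
          (γ - (α + β + 1) * x) * deriv (hypergeomF α β γ) x -
          α * β * hypergeomF α β γ x = 0) := by
  set c : ℕ → ℂ := fun n => (ascPochhammer ℂ n).eval α * (ascPochhammer ℂ n).eval β /
      ((ascPochhammer ℂ n).eval γ * (Nat.factorial n : ℂ)) with hcdef
  have hγn : ∀ n : ℕ, γ + (n : ℂ) ≠ 0 := by
    intro n h
    exact hγ n (by linear_combination h)
  have hasc : ∀ n, (ascPochhammer ℂ n).eval γ ≠ 0 := by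
    intro n
    induction n with
    | zero => simp
    | succ m ih => rw [ascPochhammer_succ_eval]; exact mul_ne_zero ih (hγn m)
  have hfac : ∀ n : ℕ, (n.factorial : ℂ) ≠ 0 := fun n => Nat.cast_ne_zero.2 n.factorial_ne_zero
  have hn1 : ∀ n : ℕ, ((n : ℂ) + 1) ≠ 0 := fun n => Nat.cast_add_one_ne_zero n
  have hD : ∀ n : ℕ, (ascPochhammer ℂ n).eval γ * (Nat.factorial n : ℂ) ≠ 0 :=
    fun n => mul_ne_zero (hasc n) (hfac n)
  -- the fundamental recurrence
  have hrec : ∀ n : ℕ, ((n:ℂ)+1) * ((n:ℂ)+γ) * c (n+1) = ((n:ℂ)+α) * ((n:ℂ)+β) * c n := by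
    intro n
    rw [hcdef]
    simp only [ascPochhammer_succ_eval, Nat.factorial_succ, Nat.cast_mul, Nat.cast_add,
      Nat.cast_one]
    rw [mul_div_assoc', mul_div_assoc', div_eq_div_iff]
    · ring
    · exact mul_ne_zero (mul_ne_zero (hasc n) (hγn n)) (mul_ne_zero (hn1 n) (hfac n))
    · exact hD n
  have hq : ∀ n : ℕ, c (n+1) = c n * (((α+n) * (β+n)) / (((1:ℂ)+n) * (γ+n))) := by
    intro n
    have hne : ((1:ℂ)+n) * (γ+n) ≠ 0 := mul_ne_zero (by rw [add_comm]; exact hn1 n) (hγn n)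
    rw [mul_div_assoc', eq_div_iff hne]
    linear_combination hrec n
  -- growth property
  have hPc : PG c := by
    intro R hR
    have hlim : Tendsto (fun n : ℕ => ‖((α+n) * (β+n)) / (((1:ℂ)+n) * (γ+n))‖) atTop (𝓝 1) := by
      have h1 : Tendsto (fun n : ℕ => (α+n)/((1:ℂ)+n)) atTop (𝓝 1) :=
        tendsto_ratio α 1 (fun n => by rw [add_comm]; exact hn1 n)
      have h2 : Tendsto (fun n : ℕ => (β+n)/(γ+n)) atTop (𝓝 1) :=
        tendsto_ratio β γ hγn
      have h3 := (h1.mul h2).norm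
      simp only [div_mul_div_comm, norm_one, mul_one] at h3
      exact h3
    have hev : ∀ᶠ n : ℕ in atTop, ‖c (n+1)‖ ≤ R * ‖c n‖ := by
      filter_upwards [hlim.eventually (eventually_le_nhds hR)] with n hn
      rw [hq n, norm_mul, mul_comm R]
      exact mul_le_mul_of_nonneg_left hn (norm_nonneg _)
    obtain ⟨N, hN⟩ := eventually_atTop.mp hev
    have hRpos : (0:ℝ) < R := by linarith
    set B : ℝ := (Finset.range (N+1)).sup' (by simp) (fun k => ‖c k‖ / R ^ k) with hB
    have key : ∀ n, ‖c n‖ / R ^ n ≤ B := by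
      intro n
      induction n with
      | zero =>
        exact Finset.le_sup' (fun k => ‖c k‖ / R ^ k) (Finset.mem_range.2 (Nat.succ_pos N))
      | succ m ih =>
        by_cases hm : m + 1 ≤ N
        · exact Finset.le_sup' (fun k => ‖c k‖ / R ^ k) (Finset.mem_range.2 (by omega))
        · have h1 : N ≤ m := by omega
          calc ‖c (m+1)‖ / R ^ (m+1) ≤ (R * ‖c m‖) / R ^ (m+1) := by
                gcongr
                exact hN m h1
              _ = ‖c m‖ / R ^ m := by
                rw [pow_succ]
                field_simp
              _ ≤ B := ih
    refine ⟨B, fun n => ?_⟩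
    have := key n
    rwa [div_le_iff₀ (pow_pos hRpos n)] at this
  -- first and second derivative coefficients
  set d : ℕ → ℂ := fun n => ((n:ℂ)+1) * c (n+1) with hd
  set e : ℕ → ℂ := fun n => ((n:ℂ)+1) * d (n+1) with he
  have hPd : PG d := ((hPc.shift.mul_nat).add hPc.shift).congr (fun n => by rw [hd]; ring)
  have hPe : PG e := ((hPd.shift.mul_nat).add hPd.shift).congr (fun n => by rw [he]; ring)
  have hF : hypergeomF α β γ = fun x => ∑' n : ℕ, c n * x ^ n := rfl
  have hGd : ∀ x : ℂ, ‖x‖ < 1 →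
      HasDerivAt (fun y => ∑' n : ℕ, c n * y ^ n) (∑' n : ℕ, d n * x ^ n) x :=
    fun x hx => hPc.hasDerivAt hx
  have hHd : ∀ x : ℂ, ‖x‖ < 1 →
      HasDerivAt (fun y => ∑' n : ℕ, d n * y ^ n) (∑' n : ℕ, e n * x ^ n) x :=
    fun x hx => hPd.hasDerivAt hx
  have hderivF : ∀ x : ℂ, ‖x‖ < 1 →
      deriv (hypergeomF α β γ) x = ∑' n : ℕ, d n * x ^ n := by
    intro x hx
    rw [hF]
    exact (hGd x hx).deriv
  refine ⟨fun x hx => hPc.summable hx, fun x hx => ?_, fun x hx => ?_⟩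
  · have hev : deriv (hypergeomF α β γ) =ᶠ[𝓝 x] (fun y => ∑' n : ℕ, d n * y ^ n) :=
      Filter.eventuallyEq_of_mem (Metric.isOpen_ball.mem_nhds (mem_ball_zero_iff.2 hx))
        (fun y hy => hderivF y (mem_ball_zero_iff.1 hy))
    exact ⟨by rw [hF]; exact (hGd x hx).differentiableAt,
      ((hHd x hx).differentiableAt).congr_of_eventuallyEq hev⟩
  · have hev : deriv (hypergeomF α β γ) =ᶠ[𝓝 x] (fun y => ∑' n : ℕ, d n * y ^ n) :=
      Filter.eventuallyEq_of_mem (Metric.isOpen_ball.mem_nhds (mem_ball_zero_iff.2 hx))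
        (fun y hy => hderivF y (mem_ball_zero_iff.1 hy))
    have h2 : deriv (deriv (hypergeomF α β γ)) x = ∑' n : ℕ, e n * x ^ n := by
      rw [hev.deriv_eq]
      exact (hHd x hx).deriv
    rw [h2, hderivF x hx, hF]
    -- summabilities
    have Sc : Summable (fun n : ℕ => c n * x ^ n) := hPc.summable hx
    have Sd : Summable (fun n : ℕ => d n * x ^ n) := hPd.summable hx
    have Sw : Summable (fun n : ℕ => (n : ℂ) * d n * x ^ n) := hPd.mul_nat.summable hx
    have Su : Summable (fun n : ℕ => (n : ℂ) * c n * x ^ n) := hPc.mul_nat.summable hx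
    have Sv : Summable (fun n : ℕ => (n : ℂ) * ((n : ℂ) - 1) * c n * x ^ n) :=
      (((hPc.mul_nat.mul_nat).add (hPc.mul_nat.const_mul (-1))).congr
        (fun n => by ring)).summable hx
    -- shifting identities
    have hxH : x * ∑' n : ℕ, e n * x ^ n = ∑' n : ℕ, (n : ℂ) * d n * x ^ n := by
      calc x * ∑' n : ℕ, e n * x ^ n = ∑' n : ℕ, x * (e n * x ^ n) := tsum_mul_left.symm
        _ = ∑' n : ℕ, (fun m : ℕ => (m : ℂ) * d m * x ^ m) (n + 1) :=
            tsum_congr fun n => by rw [he]; push_cast; ring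
        _ = ∑' n : ℕ, (n : ℂ) * d n * x ^ n := tsum_shift (by simp) Sw
    have hxG : x * ∑' n : ℕ, d n * x ^ n = ∑' n : ℕ, (n : ℂ) * c n * x ^ n := by
      calc x * ∑' n : ℕ, d n * x ^ n = ∑' n : ℕ, x * (d n * x ^ n) := tsum_mul_left.symm
        _ = ∑' n : ℕ, (fun m : ℕ => (m : ℂ) * c m * x ^ m) (n + 1) :=
            tsum_congr fun n => by rw [hd]; push_cast; ring
        _ = ∑' n : ℕ, (n : ℂ) * c n * x ^ n := tsum_shift (by simp) Su
    have hx2H : x * ∑' n : ℕ, (n : ℂ) * d n * x ^ n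
        = ∑' n : ℕ, (n : ℂ) * ((n : ℂ) - 1) * c n * x ^ n := by
      calc x * ∑' n : ℕ, (n : ℂ) * d n * x ^ n
          = ∑' n : ℕ, x * ((n : ℂ) * d n * x ^ n) := tsum_mul_left.symm
        _ = ∑' n : ℕ, (fun m : ℕ => (m : ℂ) * ((m : ℂ) - 1) * c m * x ^ m) (n + 1) :=
            tsum_congr fun n => by rw [hd]; push_cast; ring
        _ = ∑' n : ℕ, (n : ℂ) * ((n : ℂ) - 1) * c n * x ^ n := tsum_shift (by simp) Sv
    have main : x * ∑' n : ℕ, e n * x ^ n + γ * ∑' n : ℕ, d n * x ^ n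
        = x * (x * ∑' n : ℕ, e n * x ^ n) + (α+β+1) * (x * ∑' n : ℕ, d n * x ^ n)
          + α * β * ∑' n : ℕ, c n * x ^ n := by
      rw [hxH, hxG, hx2H]
      rw [← tsum_mul_left (a := γ), ← tsum_mul_left (a := α+β+1), ← tsum_mul_left (a := α*β)]
      rw [← Summable.tsum_add Sw (Sd.mul_left γ), ← Summable.tsum_add Sv (Su.mul_left (α+β+1)),
        ← Summable.tsum_add (Sv.add (Su.mul_left (α+β+1))) (Sc.mul_left (α*β))]
      refine tsum_congr fun n => ?_
      rw [hd]
      linear_combination x ^ n * hrec n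
    linear_combination main
end

section
/- d'Alembert's representation of solutions of the wave equation: let α be a nonzero real number and let u : ℝ × ℝ → ℝ be twice continuously differentiable (ContDiff ℝ 2 on ℝ × ℝ) and satisfy, for all x, t ∈ ℝ, ∂²u/∂t²(x,t) = α² · ∂²u/∂x²(x,t), where ∂²u/∂t²(x,t) = deriv (deriv (s ↦ u(x,s))) t and ∂²u/∂x²(x,t) = deriv (deriv (y ↦ u(y,t))) x. Then there exist functions φ, ψ : ℝ → ℝ such that u(x,t) = φ(x + α·t) + ψ(x − α·t) for all x, t ∈ ℝ. -/
/-- Derivative of a `C¹` function along a line. -/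
private lemma myLineDeriv {F : Type*} [NormedAddCommGroup F] [NormedSpace ℝ F]
    (g : ℝ × ℝ → F) (g' : ℝ × ℝ → (ℝ × ℝ →L[ℝ] F))
    (hg : ∀ p, HasFDerivAt g (g' p) p) (p v : ℝ × ℝ) (s : ℝ) :
    HasDerivAt (fun s : ℝ => g (p + s • v)) (g' (p + s • v) v) s := by
  have hline : HasDerivAt (fun s : ℝ => p + s • v) v s := by
    simpa using (((hasDerivAt_id s).smul_const v).const_add p)
  exact (hg _).comp_hasDerivAt s hline

/-- d'Alembert's representation of solutions of the wave equation: if `α ≠ 0` and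
`u : ℝ × ℝ → ℝ` is `C²` and satisfies `∂²u/∂t² = α² ∂²u/∂x²` everywhere, then there
are `φ, ψ : ℝ → ℝ` with `u(x,t) = φ(x + αt) + ψ(x - αt)` for all `x, t`. -/
theorem dalembert_wave_equation (α : ℝ) (hα : α ≠ 0) (u : ℝ × ℝ → ℝ)
    (hu : ContDiff ℝ 2 u)
    (hwave : ∀ x t : ℝ,
      deriv (deriv (fun s : ℝ => u (x, s))) t =
        α ^ 2 * deriv (deriv (fun y : ℝ => u (y, t))) x) :
    ∃ φ ψ : ℝ → ℝ, ∀ x t : ℝ, u (x, t) = φ (x + α * t) + ψ (x - α * t) := by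
  set f' : ℝ × ℝ → (ℝ × ℝ →L[ℝ] ℝ) := fderiv ℝ u with hf'def
  set f'' : ℝ × ℝ → (ℝ × ℝ →L[ℝ] (ℝ × ℝ →L[ℝ] ℝ)) := fderiv ℝ f' with hf''def
  have hud : Differentiable ℝ u := hu.differentiable (by norm_num)
  have hu1 : ∀ p, HasFDerivAt u (f' p) p := fun p => (hud p).hasFDerivAt
  have hf'c : ContDiff ℝ 1 f' := hu.fderiv_right le_rfl
  have hf'd : Differentiable ℝ f' := hf'c.differentiable (by norm_num)
  have hu2 : ∀ p, HasFDerivAt f' (f'' p) p := fun p => (hf'd p).hasFDerivAt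
  have hsymm : ∀ p v w, f'' p v w = f'' p w v := fun p v w =>
    second_derivative_symmetric (fun q => hu1 q) (hu2 p) v w
  -- translate the wave equation into second-fderiv language
  have hDtt : ∀ x t : ℝ, deriv (deriv (fun s : ℝ => u (x, s))) t
      = f'' (x, t) (0, 1) (0, 1) := by
    intro x t
    have h1 : deriv (fun s : ℝ => u (x, s)) = fun s => f' (x, s) ((0:ℝ), (1:ℝ)) := by
      funext s
      have h := myLineDeriv u f' hu1 (x, 0) (0, 1) s
      simp only [Prod.smul_mk, smul_eq_mul, mul_zero, mul_one, Prod.mk_add_mk,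
        add_zero, zero_add] at h
      exact h.deriv
    rw [h1]
    have h2 : HasDerivAt (fun s : ℝ => f' (x, s)) (f'' (x, t) ((0:ℝ), (1:ℝ))) t := by
      have h := myLineDeriv f' f'' hu2 (x, 0) (0, 1) t
      simp only [Prod.smul_mk, smul_eq_mul, mul_zero, mul_one, Prod.mk_add_mk,
        add_zero, zero_add] at h
      exact h
    have h3 := h2.clm_apply (hasDerivAt_const t ((0:ℝ), (1:ℝ)))
    simpa using h3.deriv
  have hDxx : ∀ x t : ℝ, deriv (deriv (fun y : ℝ => u (y, t))) x
      = f'' (x, t) (1, 0) (1, 0) := by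
    intro x t
    have h1 : deriv (fun y : ℝ => u (y, t)) = fun y => f' (y, t) ((1:ℝ), (0:ℝ)) := by
      funext s
      have h := myLineDeriv u f' hu1 (0, t) (1, 0) s
      simp only [Prod.smul_mk, smul_eq_mul, mul_zero, mul_one, Prod.mk_add_mk,
        add_zero, zero_add] at h
      exact h.deriv
    rw [h1]
    have h2 : HasDerivAt (fun y : ℝ => f' (y, t)) (f'' (x, t) ((1:ℝ), (0:ℝ))) x := by
      have h := myLineDeriv f' f'' hu2 (0, t) (1, 0) x
      simp only [Prod.smul_mk, smul_eq_mul, mul_zero, mul_one, Prod.mk_add_mk,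
        add_zero, zero_add] at h
      exact h
    have h3 := h2.clm_apply (hasDerivAt_const x ((1:ℝ), (0:ℝ)))
    simpa using h3.deriv
  have hW : ∀ p : ℝ × ℝ, f'' p (0, 1) (0, 1) = α ^ 2 * f'' p (1, 0) (1, 0) := by
    rintro ⟨x, t⟩
    rw [← hDtt, ← hDxx]
    exact hwave x t
  -- characteristic directions
  set a : ℝ × ℝ := (1/2, 1/(2*α)) with ha_def
  set b : ℝ × ℝ := (1/2, -(1/(2*α))) with hb_def
  -- mixed second derivative in characteristic directions vanishes
  have hmix : ∀ p : ℝ × ℝ, f'' p b a = 0 := by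
    intro p
    have hb : b = (1/2 : ℝ) • ((1:ℝ), (0:ℝ)) + (-(1/(2*α))) • ((0:ℝ), (1:ℝ)) := by
      ext <;> simp [hb_def]
    have ha : a = (1/2 : ℝ) • ((1:ℝ), (0:ℝ)) + (1/(2*α)) • ((0:ℝ), (1:ℝ)) := by
      ext <;> simp [ha_def]
    rw [hb, ha]
    simp only [map_add, map_smul, ContinuousLinearMap.add_apply,
      ContinuousLinearMap.smul_apply, smul_eq_mul]
    rw [hsymm p (0, 1) (1, 0), hW p]
    field_simp
    ring
  -- first integration: ∂₁w constant in η
  have stepA : ∀ ξ η : ℝ, f' (ξ • a + η • b) a = f' (ξ • a) a := by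
    intro ξ η
    have hd : ∀ s : ℝ, HasDerivAt (fun s : ℝ => f' (ξ • a + s • b) a) 0 s := by
      intro s
      have h1 := myLineDeriv f' f'' hu2 (ξ • a) b s
      have h2 := h1.clm_apply (hasDerivAt_const s a)
      simpa [hmix] using h2
    have h := is_const_of_deriv_eq_zero
      (fun s => (hd s).differentiableAt) (fun s => (hd s).deriv) η 0
    simpa using h
  -- second integration
  have stepB : ∀ ξ η : ℝ, u (ξ • a + η • b) = u (ξ • a) + (u (η • b) - u 0) := by
    intro ξ η
    have hd : ∀ s : ℝ, HasDerivAt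
        (fun s : ℝ => u (η • b + s • a) - u ((0 : ℝ × ℝ) + s • a)) 0 s := by
      intro s
      have h1 := myLineDeriv u f' hu1 (η • b) a s
      have h2 := myLineDeriv u f' hu1 0 a s
      have h3 := h1.sub h2
      have key : f' (η • b + s • a) a - f' ((0 : ℝ × ℝ) + s • a) a = 0 := by
        rw [add_comm (η • b), zero_add, stepA s η, sub_self]
      rwa [key] at h3
    have h := is_const_of_deriv_eq_zero
      (fun s => (hd s).differentiableAt) (fun s => (hd s).deriv) ξ 0
    simp only [zero_add, zero_smul, add_zero] at h
    rw [add_comm (ξ • a)]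
    linarith [h]
  refine ⟨fun s => u (s • a), fun s => u (s • b) - u 0, fun x t => ?_⟩
  have hpt : ((x + α * t) • a + (x - α * t) • b : ℝ × ℝ) = (x, t) := by
    ext
    · simp [ha_def, hb_def]; ring
    · simp [ha_def, hb_def]; field_simp; ring
  rw [← hpt, stepB]
end
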